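/- Let n ≥ 1, let T₀ > 0, let (a_{αβ})_{α,β=1}^n be a constant symmetric matrix of real numbers, and let (x_α, u_α, T_α) be a differentiable solution of the PB-CS model with T_α(t) > 0 for all α, t. Then at every time t, (d/dt) ℰ(t)² = (1/n) ∑_{α,β=1}^n a_{αβ} (T₀² / (T_α(t) T_β(t))) (E_α(t) − E_β(t)) (T_β(t) − T_α(t)). -/

import Mathlib

theorem stmt15 (n d : ℕ) (hn : 1 ≤ n) (T₀ : ℝ) (hT₀ : 0 < T₀)
    (a : Fin n → Fin n → ℝ) (ha_symm : ∀ α β, a α β = a β α)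
    (x u : Fin n → ℝ → EuclideanSpace ℝ (Fin d)) (T : Fin n → ℝ → ℝ)
    (hTpos : ∀ α t, 0 < T α t)
    (hx : ∀ α t, HasDerivAt (x α) (u α t) t)
    (hu : ∀ α t, HasDerivAt (u α)
      ((T₀ / (n : ℝ)) • ∑ β, a α β • ((T β t)⁻¹ • u β t - (T α t)⁻¹ • u α t)) t)
    (hT : ∀ α t, HasDerivAt (fun s => T α s + ‖u α s‖ ^ 2 / 2)
      ((T₀ ^ 2 / (n : ℝ)) * ∑ β, a α β * ((T α t)⁻¹ - (T β t)⁻¹)) t) :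
    ∀ t, HasDerivAt (fun s => ∑ α, (T α s + ‖u α s‖ ^ 2 / 2 - T₀) ^ 2)
      ((n : ℝ)⁻¹ * ∑ α, ∑ β, a α β * (T₀ ^ 2 / (T α t * T β t)) *
        ((T α t + ‖u α t‖ ^ 2 / 2 - T₀) - (T β t + ‖u β t‖ ^ 2 / 2 - T₀)) *
        (T β t - T α t)) t := by
  intro t
  set E : Fin n → ℝ := fun α => T α t + ‖u α t‖ ^ 2 / 2 - T₀ with hE
  have hn0 : (n : ℝ) ≠ 0 := by positivity
  have key : ∀ α : Fin n, HasDerivAt (fun s => (T α s + ‖u α s‖ ^ 2 / 2 - T₀) ^ 2)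
      (2 * E α * ((T₀ ^ 2 / (n : ℝ)) * ∑ β, a α β * ((T α t)⁻¹ - (T β t)⁻¹))) t := by
    intro α
    have h1 := ((hT α t).sub_const T₀).fun_pow 2
    refine h1.congr_deriv (Eq.symm ?_)
    simp [hE]
  have hsum := HasDerivAt.fun_sum (fun α (_ : α ∈ Finset.univ) => key α)
  refine hsum.congr_deriv (Eq.symm ?_)
  -- algebraic identity
  set F : Fin n → Fin n → ℝ := fun α β =>
    a α β * (T₀ ^ 2 / (T α t * T β t)) * (E α - E β) * (T β t - T α t) with hF
  set G : Fin n → Fin n → ℝ := fun α β =>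
    2 * E α * T₀ ^ 2 * (a α β * ((T α t)⁻¹ - (T β t)⁻¹)) with hG
  have anti : ∀ α β, F α β - G α β = -(F β α - G β α) := by
    intro α β
    have hTa := (hTpos α t).ne'
    have hTb := (hTpos β t).ne'
    simp only [hF, hG]
    rw [ha_symm α β]
    field_simp
    ring
  have hzero : ∑ α, ∑ β, (F α β - G α β) = 0 := by
    have h2 : ∑ α, ∑ β, (F α β - G α β) = ∑ β, ∑ α, (F α β - G α β) := Finset.sum_comm
    have h3 : ∑ β, ∑ α, (F α β - G α β) = -∑ α, ∑ β, (F α β - G α β) := by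
      rw [← Finset.sum_neg_distrib]
      refine Finset.sum_congr rfl fun β _ => ?_
      rw [← Finset.sum_neg_distrib]
      exact Finset.sum_congr rfl fun α _ => anti α β
    linarith [h2, h3]
  have hFG : ∑ α, ∑ β, F α β = ∑ α, ∑ β, G α β := by
    have := hzero
    rw [Finset.sum_congr rfl (fun α _ => Finset.sum_sub_distrib _ _), Finset.sum_sub_distrib] at this
    linarith
  calc (n : ℝ)⁻¹ * ∑ α, ∑ β, F α β = (n : ℝ)⁻¹ * ∑ α, ∑ β, G α β := by rw [hFG]
    _ = ∑ α, 2 * E α * ((T₀ ^ 2 / (n : ℝ)) * ∑ β, a α β * ((T α t)⁻¹ - (T β t)⁻¹)) := by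
        rw [Finset.mul_sum]
        refine Finset.sum_congr rfl fun α _ => ?_
        rw [Finset.mul_sum, Finset.mul_sum, Finset.mul_sum]
        refine Finset.sum_congr rfl fun β _ => ?_
        simp only [hG]
        ring
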